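/- Let n > 1 be odd. In the graded ring H = ℤ[y₁,y₂]/⟨y₁ⁿ(y₁+y₂), y₂(2y₁+y₂)⟩, for all integers c, d one has (c·y₁ + d·y₂)^(n+1) = ((c^(n+1) + (c−2d)^(n+1))/2)·y₁^(n+1), and consequently (c·y₁+d·y₂)^(n+1) = 0 implies c = d = 0. -/

import Mathlib

open MvPolynomial

private def fseq (p q : ℤ) : ℕ → ℤ × ℤ
  | 0 => (1, 0)
  | (m+1) => ((fseq p q m).1 * p + (fseq p q m).2 * q,
              (fseq p q m).1 * q + (fseq p q m).2 * p)

private lemma fseq_add (p q : ℤ) : ∀ m, (fseq p q m).1 + (fseq p q m).2 = (p + q) ^ m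
  | 0 => by simp [fseq]
  | (m+1) => by
      have ih := fseq_add p q m
      simp only [fseq, pow_succ]
      linear_combination (p + q) * ih

private lemma fseq_sub (p q : ℤ) : ∀ m, (fseq p q m).1 - (fseq p q m).2 = (p - q) ^ m
  | 0 => by simp [fseq]
  | (m+1) => by
      have ih := fseq_sub p q m
      simp only [fseq, pow_succ]
      linear_combination (p - q) * ih

private lemma pow_fseq {S : Type*} [CommRing S] (a u : S) (hu : u * u = a * a) (p q : ℤ) :
    ∀ m : ℕ, ((p : S) * a + (q : S) * u) ^ (m + 1) =
      ((fseq p q (m+1)).1 : S) * a ^ (m+1) + ((fseq p q (m+1)).2 : S) * (a ^ m * u)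
  | 0 => by simp [fseq]
  | (m+1) => by
      have ih := pow_fseq a u hu p q m
      rw [pow_succ, ih]
      simp only [fseq]
      push_cast
      linear_combination ((((fseq p q m).1 : S) * (q : S) + ((fseq p q m).2 : S) * (p : S)) * (q : S) * a ^ m) * hu

-- assume psi etc from t2 (copy)
private noncomputable def psi (n : ℕ) (p : MvPolynomial (Fin 2) ℤ) : ℤ :=
  ∑ k ∈ Finset.range ((n+1)/2 + 1),
    coeff (Finsupp.single 0 (n + 1 - 2*k) + Finsupp.single 1 (2*k)) p

private lemma psi_add (n : ℕ) (p q : MvPolynomial (Fin 2) ℤ) :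
    psi n (p + q) = psi n p + psi n q := by
  simp [psi, coeff_add, Finset.sum_add_distrib]

private lemma psi_sub (n : ℕ) (p q : MvPolynomial (Fin 2) ℤ) :
    psi n (p - q) = psi n p - psi n q := by
  simp [psi, coeff_sub, Finset.sum_sub_distrib]

private lemma upair (u : Fin 2 →₀ ℕ) (i j : ℕ) :
    u = Finsupp.single 0 i + Finsupp.single 1 j ↔ u 0 = i ∧ u 1 = j := by
  constructor
  · rintro rfl
    simp [Finsupp.single_apply]
  · rintro ⟨h0, h1⟩
    ext x
    fin_cases x <;> simp [Finsupp.single_apply, ← h0, ← h1]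

private lemma psi_monomial (n : ℕ) (u : Fin 2 →₀ ℕ) (a : ℤ) :
    psi n (monomial u a) =
      ∑ k ∈ Finset.range ((n+1)/2 + 1),
        if u 0 = n + 1 - 2*k ∧ u 1 = 2*k then a else 0 := by
  unfold psi
  refine Finset.sum_congr rfl fun k _ => ?_
  rw [coeff_monomial]
  exact if_congr (upair u _ _) rfl rfl

private lemma mono_mul (u : Fin 2 →₀ ℕ) (a : ℤ) (i j : ℕ) :
    monomial u a * (X 0 ^ i * X 1 ^ j) =
      monomial (u + (Finsupp.single 0 i + Finsupp.single 1 j)) a := by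
  rw [X_pow_eq_monomial, X_pow_eq_monomial, monomial_mul, monomial_mul]
  simp [add_assoc]

private lemma psi_mul_g1 (n : ℕ) (hn : 0 < n) (q : MvPolynomial (Fin 2) ℤ) :
    psi n (q * (X 0 ^ n * X 1)) = 0 := by
  induction q using MvPolynomial.induction_on' with
  | add p q hp hq => rw [add_mul, psi_add, hp, hq, add_zero]
  | monomial u a =>
      have : (X 1 : MvPolynomial (Fin 2) ℤ) = X 1 ^ 1 := by ring
      rw [this, mono_mul, psi_monomial]
      refine Finset.sum_eq_zero fun k hk => ?_
      rw [if_neg]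
      rintro ⟨h1, h2⟩
      simp [Finsupp.add_apply, Finsupp.single_apply] at h1 h2
      omega

private lemma psi_mul_g2 (n N : ℕ) (hN : n + 1 = 2*N) (q : MvPolynomial (Fin 2) ℤ) :
    psi n (q * (X 1 ^ 2 - X 0 ^ 2)) = 0 := by
  have hr : (n+1)/2 = N := by omega
  induction q using MvPolynomial.induction_on' with
  | add p q hp hq => rw [add_mul, psi_add, hp, hq, add_zero]
  | monomial u a =>
      rw [mul_sub]
      have e1 : monomial u a * (X 1 : MvPolynomial (Fin 2) ℤ) ^ 2
          = monomial u a * (X 0 ^ 0 * X 1 ^ 2) := by ring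
      have e2 : monomial u a * (X 0 : MvPolynomial (Fin 2) ℤ) ^ 2
          = monomial u a * (X 0 ^ 2 * X 1 ^ 0) := by ring
      rw [e1, e2, mono_mul, mono_mul, psi_sub, psi_monomial, psi_monomial, hr, sub_eq_zero]
      simp only [Finsupp.add_apply, Finsupp.single_apply]
      norm_num
      rw [Finset.sum_range_succ', Finset.sum_range_succ]
      rw [if_neg (by omega), if_neg (by omega), add_zero, add_zero]
      refine Finset.sum_congr rfl fun k hk => ?_
      have hk' : k < N := Finset.mem_range.mp hk
      exact if_congr (by omega) rfl rfl

private lemma psi_C_X0 (n : ℕ) (e : ℤ) :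
    psi n (C e * X 0 ^ (n+1)) = e := by
  have h : (C e * X 0 ^ (n+1) : MvPolynomial (Fin 2) ℤ)
      = monomial (Finsupp.single 0 (n+1) + Finsupp.single 1 0) e := by
    rw [X_pow_eq_monomial, C_mul_monomial, mul_one]
    simp
  rw [h, psi_monomial]
  simp only [Finsupp.add_apply, Finsupp.single_apply]
  norm_num
  rw [Finset.sum_range_succ']
  rw [if_pos (by omega)]
  have : ∀ k ∈ Finset.range ((n+1)/2),
      (if n + 1 = n + 1 - 2 * (k+1) ∧ k + 1 = 0 then e else 0) = 0 :=
    fun k _ => if_neg (by omega)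
  rw [Finset.sum_congr rfl this, Finset.sum_const_zero, zero_add]

private lemma psi_mem (n N : ℕ) (hn : 0 < n) (hN : n + 1 = 2*N) (e : ℤ)
    (h : C e * X 0 ^ (n+1) ∈ Ideal.span {(X 0 : MvPolynomial (Fin 2) ℤ) ^ n * X 1, X 1 ^ 2 - X 0 ^ 2}) :
    e = 0 := by
  rw [Ideal.mem_span_pair] at h
  obtain ⟨a, b, hab⟩ := h
  have := congrArg (psi n) hab
  rw [psi_add, psi_mul_g1 n hn, psi_mul_g2 n N hN, add_zero, psi_C_X0] at this
  exact this.symm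

private lemma transfer (n : ℕ) (e : ℤ)
    (h : C e * X 0 ^ (n+1) ∈ Ideal.span {(X 0 : MvPolynomial (Fin 2) ℤ) ^ n * (X 0 + X 1), X 1 * (2 * X 0 + X 1)}) :
    C e * X 0 ^ (n+1) ∈ Ideal.span {(X 0 : MvPolynomial (Fin 2) ℤ) ^ n * X 1, X 1 ^ 2 - X 0 ^ 2} := by
  rw [Ideal.mem_span_pair] at h ⊢
  obtain ⟨a, b, hab⟩ := h
  set g : Fin 2 → MvPolynomial (Fin 2) ℤ := ![X 0, X 1 - X 0] with hg
  refine ⟨aeval g a, aeval g b, ?_⟩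
  have h2 := congrArg (aeval g) hab
  simp only [map_add, map_mul, map_pow, aeval_X, aeval_C, algebraMap_eq, hg,
    Matrix.cons_val_zero, Matrix.cons_val_one, Matrix.head_cons, map_ofNat] at h2
  linear_combination h2

set_option maxHeartbeats 1000000 in
theorem stmt4 (n : ℕ) (hn : 1 < n) (hodd : Odd n) (c d : ℤ) :
    (Ideal.Quotient.mk
        (Ideal.span {(X 0 : MvPolynomial (Fin 2) ℤ) ^ n * (X 0 + X 1), X 1 * (2 * X 0 + X 1)})
        (C c * X 0 + C d * X 1)) ^ (n + 1) =
      Ideal.Quotient.mk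
        (Ideal.span {(X 0 : MvPolynomial (Fin 2) ℤ) ^ n * (X 0 + X 1), X 1 * (2 * X 0 + X 1)})
        (C ((c ^ (n + 1) + (c - 2 * d) ^ (n + 1)) / 2) * X 0 ^ (n + 1)) ∧
    ((Ideal.Quotient.mk
        (Ideal.span {(X 0 : MvPolynomial (Fin 2) ℤ) ^ n * (X 0 + X 1), X 1 * (2 * X 0 + X 1)})
        (C c * X 0 + C d * X 1)) ^ (n + 1) = 0 → c = 0 ∧ d = 0) := by
  set I : Ideal (MvPolynomial (Fin 2) ℤ) :=
    Ideal.span {(X 0 : MvPolynomial (Fin 2) ℤ) ^ n * (X 0 + X 1), X 1 * (2 * X 0 + X 1)} with hI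
  set mk : MvPolynomial (Fin 2) ℤ →+* _ := Ideal.Quotient.mk I with hmk
  set a := mk (X 0)
  set b := mk (X 1)
  -- relations
  have hm1 : (X 0 : MvPolynomial (Fin 2) ℤ) ^ n * (X 0 + X 1) ∈ I :=
    Ideal.subset_span (by simp)
  have hm2 : (X 1 : MvPolynomial (Fin 2) ℤ) * (2 * X 0 + X 1) ∈ I :=
    Ideal.subset_span (by simp)
  have h1 : a ^ n * (a + b) = 0 := by
    have h := Ideal.Quotient.eq_zero_iff_mem.mpr hm1
    rw [map_mul, map_pow, map_add] at h
    exact h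
  have h2 : b * (2 * a + b) = 0 := by
    have h := Ideal.Quotient.eq_zero_iff_mem.mpr hm2
    rw [map_mul, map_add, map_mul, map_ofNat] at h
    exact h
  have hu : (a + b) * (a + b) = a * a := by linear_combination h2
  have hmkC : ∀ r : ℤ, mk (C r) = (r : MvPolynomial (Fin 2) ℤ ⧸ I) := by
    intro r
    rw [show (C r : MvPolynomial (Fin 2) ℤ) = (r : MvPolynomial (Fin 2) ℤ) from
      eq_intCast (C : ℤ →+* MvPolynomial (Fin 2) ℤ) r, map_intCast]
  have hX : mk (C c * X 0 + C d * X 1)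
      = ((c - d : ℤ) : MvPolynomial (Fin 2) ℤ ⧸ I) * a + ((d : ℤ) : _) * (a + b) := by
    rw [map_add, map_mul, map_mul, hmkC, hmkC]
    push_cast
    ring
  obtain ⟨t, ht⟩ := hodd
  set e : ℤ := (c ^ (n + 1) + (c - 2 * d) ^ (n + 1)) / 2 with he
  have hadd := fseq_add (c - d) d (n + 1)
  have hsub := fseq_sub (c - d) d (n + 1)
  rw [show c - d + d = c by ring] at hadd
  rw [show c - d - d = c - 2 * d by ring] at hsub
  have h2A : 2 * (fseq (c - d) d (n + 1)).1 = c ^ (n + 1) + (c - 2 * d) ^ (n + 1) := by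
    linarith
  have hA : (fseq (c - d) d (n + 1)).1 = e := by omega
  have key := pow_fseq a (a + b) hu (c - d) d n
  have part1 : (mk (C c * X 0 + C d * X 1)) ^ (n + 1) = mk (C e * X 0 ^ (n + 1)) := by
    rw [hX, key, h1, mul_zero, add_zero, hA, map_mul, map_pow, hmkC]
  refine ⟨part1, fun h0 => ?_⟩
  rw [part1] at h0
  have hmem : C e * X 0 ^ (n + 1) ∈ I := Ideal.Quotient.eq_zero_iff_mem.mp h0
  have he0 : e = 0 :=
    psi_mem n (t + 1) (by omega) (by omega) e (transfer n e (hI ▸ hmem))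
  have hsum : c ^ (n + 1) + (c - 2 * d) ^ (n + 1) = 0 := by omega
  have hev : Even (n + 1) := by
    refine ⟨t + 1, by omega⟩
  have hc1 : (0 : ℤ) ≤ c ^ (n + 1) := hev.pow_nonneg c
  have hc2 : (0 : ℤ) ≤ (c - 2 * d) ^ (n + 1) := hev.pow_nonneg (c - 2 * d)
  have hc : c ^ (n + 1) = 0 := by linarith
  have hcd : (c - 2 * d) ^ (n + 1) = 0 := by linarith
  have hc0 : c = 0 := pow_eq_zero_iff (Nat.succ_ne_zero n) |>.mp hc
  have hd0 : c - 2 * d = 0 := pow_eq_zero_iff (Nat.succ_ne_zero n) |>.mp hcd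
  exact ⟨hc0, by omega⟩
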